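/- For natural numbers m ≤ n and real x: ((-x)^m / m!) L_n^{(m-n)}(x) = ((-x)^n / n!) L_m^{(n-m)}(x), where L_k^{(α)} denotes the generalized (associated) Laguerre polynomial. -/

import Mathlib

/-- The generalized (associated) Laguerre polynomial
`L_k^{(α)}(x) = Σ_{j=0}^k binom(k+α, k-j) (-x)^j / j!`, where for integer
(possibly negative) `α` the binomial coefficient `binom(k+α, k-j)` is
interpreted via the falling factorial `(k+α)(k+α-1)⋯(k+α-(k-j)+1)/(k-j)!`. -/
noncomputable def genLaguerre (k : ℕ) (α : ℤ) (x : ℝ) : ℝ :=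
  ∑ j ∈ Finset.range (k + 1),
    ((∏ i ∈ Finset.range (k - j), ((k : ℝ) + (α : ℝ) - (i : ℝ))) /
        (Nat.factorial (k - j) : ℝ)) *
      ((-x) ^ j / (Nat.factorial j : ℝ))

/-- for m ≤ n, ((-x)^m/m!) L_n^{(m-n)}(x) = ((-x)^n/n!) L_m^{(n-m)}(x). -/

lemma prod_range_cast_sub (M k : ℕ) (hk : k ≤ M) :
    ∏ i ∈ Finset.range k, ((M : ℝ) - i) =
      (Nat.factorial M : ℝ) / (Nat.factorial (M - k) : ℝ) := by
  induction k with
  | zero =>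
    rw [Finset.prod_range_zero, Nat.sub_zero, div_self (by positivity)]
  | succ k ih =>
    have hk' : k ≤ M := by omega
    have h1 : M - k = (M - (k + 1)) + 1 := by omega
    have h2 : ((M : ℝ) - k) = ((M - k : ℕ) : ℝ) := by
      push_cast [hk']; ring
    rw [Finset.prod_range_succ, ih hk', h2, h1, Nat.factorial_succ]
    simp only [Nat.cast_mul, Nat.cast_add, Nat.cast_one]
    have h4 : ((M - (k+1) : ℕ) : ℝ) + 1 ≠ 0 := by positivity
    rw [div_mul_eq_mul_div, mul_comm ((Nat.factorial M : ℕ) : ℝ),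
      mul_div_mul_left _ _ h4]

theorem stmt_13 (m n : ℕ) (hmn : m ≤ n) (x : ℝ) :
    ((-x) ^ m / (Nat.factorial m : ℝ)) * genLaguerre n ((m : ℤ) - (n : ℤ)) x =
      ((-x) ^ n / (Nat.factorial n : ℝ)) * genLaguerre m ((n : ℤ) - (m : ℤ)) x := by
  unfold genLaguerre
  rw [Finset.mul_sum, Finset.mul_sum]
  have hsplit : n + 1 = (n - m) + (m + 1) := by omega
  rw [hsplit, Finset.sum_range_add]
  have hz : ∀ j ∈ Finset.range (n - m),
      (-x) ^ m / (Nat.factorial m : ℝ) *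
        ((∏ i ∈ Finset.range (n - j), ((n : ℝ) + (((m : ℤ) - (n : ℤ) : ℤ) : ℝ) - (i : ℝ))) /
            (Nat.factorial (n - j) : ℝ) * ((-x) ^ j / (Nat.factorial j : ℝ))) = 0 := by
    intro j hj
    rw [Finset.mem_range] at hj
    have hmem : m ∈ Finset.range (n - j) := by
      rw [Finset.mem_range]; omega
    rw [Finset.prod_eq_zero hmem (by push_cast; ring)]
    simp
  rw [Finset.sum_eq_zero hz, zero_add]
  refine Finset.sum_congr rfl ?_
  intro t ht
  rw [Finset.mem_range] at ht
  have htm : t ≤ m := by omega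
  have e1 : n - (n - m + t) = m - t := by omega
  have e2 : ∀ i : ℕ, (n : ℝ) + (((m : ℤ) - (n : ℤ) : ℤ) : ℝ) - (i : ℝ) = (m : ℝ) - i := by
    intro i; push_cast; ring
  have e3 : ∀ i : ℕ, (m : ℝ) + (((n : ℤ) - (m : ℤ) : ℤ) : ℝ) - (i : ℝ) = (n : ℝ) - i := by
    intro i; push_cast; ring
  simp only [e1, e2, e3]
  rw [prod_range_cast_sub m (m - t) (by omega), prod_range_cast_sub n (m - t) (by omega)]
  have e4 : m - (m - t) = t := by omega
  have e5 : n - (m - t) = n - m + t := by omega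
  rw [e4, e5]
  have f1 : (Nat.factorial m : ℝ) ≠ 0 := by positivity
  have f2 : (Nat.factorial n : ℝ) ≠ 0 := by positivity
  have f3 : (Nat.factorial t : ℝ) ≠ 0 := by positivity
  have f4 : (Nat.factorial (m - t) : ℝ) ≠ 0 := by positivity
  have f5 : (Nat.factorial (n - m + t) : ℝ) ≠ 0 := by positivity
  have hp : (-x) ^ m * (-x) ^ (n - m + t) = (-x) ^ n * (-x) ^ t := by
    rw [← pow_add, ← pow_add]; congr 1; omega
  trans (((-x) ^ m * (-x) ^ (n - m + t)) /
      ((Nat.factorial t : ℝ) * (Nat.factorial (m - t) : ℝ) * (Nat.factorial (n - m + t) : ℝ)))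
  · field_simp
  · rw [hp]
    field_simp
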